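/- The Hamiltonian condition for the twist function in the flat example: the function f : V → ℝ, f(p) = β(p, A p), is differentiable, and for every p ∈ V the Fréchet derivative of f at p is the linear functional w ↦ −G(A p, w). -/

import Mathlib

open Finset

/-- The underlying space of the flat hyperKähler manifold `ℍ^{p,q}`:
each point has components `w i = (wx i, wy i, wu i, wv i)`. -/
abbrev HV (n : ℕ) := Fin n → ℝ × ℝ × ℝ × ℝ

variable {n : ℕ}

/-- The flat (pseudo-)Riemannian metric `g`. -/
def gF (ε : Fin n → ℝ) (v w : HV n) : ℝ :=
  ∑ i, ε i * ((v i).1 * (w i).1 + (v i).2.1 * (w i).2.1 +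
    (v i).2.2.1 * (w i).2.2.1 + (v i).2.2.2 * (w i).2.2.2)

/-- The Kähler two-form `ω_I`. -/
def omegaI (ε : Fin n → ℝ) (v w : HV n) : ℝ :=
  ∑ i, ε i * ((v i).1 * (w i).2.1 - (v i).2.1 * (w i).1 -
    (v i).2.2.1 * (w i).2.2.2 + (v i).2.2.2 * (w i).2.2.1)

/-- The Kähler two-form `ω_J`. -/
def omegaJ (ε : Fin n → ℝ) (v w : HV n) : ℝ :=
  ∑ i, ε i * ((v i).2.2.1 * (w i).1 - (v i).1 * (w i).2.2.1 +
    (v i).2.2.2 * (w i).2.1 - (v i).2.1 * (w i).2.2.2)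

/-- The Kähler two-form `ω_K`. -/
def omegaK (ε : Fin n → ℝ) (v w : HV n) : ℝ :=
  ∑ i, ε i * ((v i).2.2.1 * (w i).2.1 - (v i).2.1 * (w i).2.2.1 -
    (v i).2.2.2 * (w i).1 + (v i).1 * (w i).2.2.2)

/-- The complex structure `I`: `(I w) i = (−wy i, wx i, wv i, −wu i)`. -/
def Imap (w : HV n) : HV n := fun i =>
  (-(w i).2.1, (w i).1, (w i).2.2.2, -(w i).2.2.1)

/-- The complex structure `J`: `(J w) i = (wu i, wv i, −wx i, −wy i)`. -/
def Jmap (w : HV n) : HV n := fun i =>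
  ((w i).2.2.1, (w i).2.2.2, -(w i).1, -(w i).2.1)

/-- The complex structure `K`: `(K w) i = (−wv i, wu i, −wy i, wx i)`. -/
def Kmap (w : HV n) : HV n := fun i =>
  (-(w i).2.2.2, (w i).2.2.1, -(w i).2.1, (w i).1)

/-- The linear map `A` generating the rotating symmetry `X(p) = A p`. -/
noncomputable def Amap (lam : Fin n → ℝ) (w : HV n) : HV n := fun i =>
  ((1 / 2 - lam i) * (w i).2.1, -(1 / 2 - lam i) * (w i).1,
    -(1 / 2 + lam i) * (w i).2.2.2, (1 / 2 + lam i) * (w i).2.2.1)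

/-- The two-form `G` with `dα₀ = G − ω_I`. -/
def Gform (ε lam : Fin n → ℝ) (v w : HV n) : ℝ :=
  2 * ∑ i, ε i * lam i * ((v i).1 * (w i).2.1 - (v i).2.1 * (w i).1 +
    (v i).2.2.1 * (w i).2.2.2 - (v i).2.2.2 * (w i).2.2.1)

/-- The one-form (primitive of `G`) `β`. -/
def betaForm (ε lam : Fin n → ℝ) (p w : HV n) : ℝ :=
  ∑ i, ε i * lam i * (-(p i).2.1 * (w i).1 + (p i).1 * (w i).2.1 -
    (p i).2.2.2 * (w i).2.2.1 + (p i).2.2.1 * (w i).2.2.2)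

/-- The Kähler moment map `μ`. -/
noncomputable def muMap (ε lam : Fin n → ℝ) (p : HV n) : ℝ :=
  (1 / 2) * ∑ i, ε i * ((1 / 2 - lam i) * ((p i).1 ^ 2 + (p i).2.1 ^ 2) +
    (1 / 2 + lam i) * ((p i).2.2.1 ^ 2 + (p i).2.2.2 ^ 2))


section Aux

variable {n : ℕ}

noncomputable def coordX (i : Fin n) : HV n →L[ℝ] ℝ :=
  (ContinuousLinearMap.fst ℝ ℝ (ℝ × ℝ × ℝ)).comp
    (ContinuousLinearMap.proj (R := ℝ) (φ := fun _ : Fin n => ℝ × ℝ × ℝ × ℝ) i)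

noncomputable def coordY (i : Fin n) : HV n →L[ℝ] ℝ :=
  ((ContinuousLinearMap.fst ℝ ℝ (ℝ × ℝ)).comp
    (ContinuousLinearMap.snd ℝ ℝ (ℝ × ℝ × ℝ))).comp
    (ContinuousLinearMap.proj (R := ℝ) (φ := fun _ : Fin n => ℝ × ℝ × ℝ × ℝ) i)

noncomputable def coordU (i : Fin n) : HV n →L[ℝ] ℝ :=
  ((ContinuousLinearMap.fst ℝ ℝ ℝ).comp
    ((ContinuousLinearMap.snd ℝ ℝ (ℝ × ℝ)).comp
      (ContinuousLinearMap.snd ℝ ℝ (ℝ × ℝ × ℝ)))).comp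
    (ContinuousLinearMap.proj (R := ℝ) (φ := fun _ : Fin n => ℝ × ℝ × ℝ × ℝ) i)

noncomputable def coordV (i : Fin n) : HV n →L[ℝ] ℝ :=
  ((ContinuousLinearMap.snd ℝ ℝ ℝ).comp
    ((ContinuousLinearMap.snd ℝ ℝ (ℝ × ℝ)).comp
      (ContinuousLinearMap.snd ℝ ℝ (ℝ × ℝ × ℝ)))).comp
    (ContinuousLinearMap.proj (R := ℝ) (φ := fun _ : Fin n => ℝ × ℝ × ℝ × ℝ) i)

@[simp] lemma coordX_apply (i : Fin n) (q : HV n) : coordX i q = (q i).1 := rfl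
@[simp] lemma coordY_apply (i : Fin n) (q : HV n) : coordY i q = (q i).2.1 := rfl
@[simp] lemma coordU_apply (i : Fin n) (q : HV n) : coordU i q = (q i).2.2.1 := rfl
@[simp] lemma coordV_apply (i : Fin n) (q : HV n) : coordV i q = (q i).2.2.2 := rfl

end Aux

/-- the Hamiltonian condition `d(β(X)) = −X ⌟ G` in the flat example. -/
theorem flat_hamiltonian_condition (n : ℕ) (ε : Fin n → ℝ)
    (hε : ∀ i, ε i = 1 ∨ ε i = -1) (lam : Fin n → ℝ) :
    Differentiable ℝ (fun p : HV n => betaForm ε lam p (Amap lam p)) ∧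
    ∀ p : HV n, ∃ D : HV n →L[ℝ] ℝ,
      (∀ w : HV n, D w = -Gform ε lam (Amap lam p) w) ∧
      HasFDerivAt (fun p : HV n => betaForm ε lam p (Amap lam p)) D p := by
  have key : ∀ p : HV n, HasFDerivAt
      (fun p : HV n => betaForm ε lam p (Amap lam p))
      (∑ i, ((-(ε i * lam i * (1 / 2 - lam i))) •
          ((coordX i p • coordX i + coordX i p • coordX i) +
            (coordY i p • coordY i + coordY i p • coordY i)) +
        (ε i * lam i * (1 / 2 + lam i)) •
          ((coordU i p • coordU i + coordU i p • coordU i) +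
            (coordV i p • coordV i + coordV i p • coordV i)))) p := by
    intro p
    have hfeq : (fun q : HV n => betaForm ε lam q (Amap lam q)) =
        fun q : HV n => ∑ i,
          ((-(ε i * lam i * (1 / 2 - lam i))) *
            ((coordX i q * coordX i q) + (coordY i q * coordY i q)) +
           (ε i * lam i * (1 / 2 + lam i)) *
            ((coordU i q * coordU i q) + (coordV i q * coordV i q))) := by
      funext q
      unfold betaForm Amap
      refine Finset.sum_congr rfl fun i _ => ?_
      simp only [coordX_apply, coordY_apply, coordU_apply, coordV_apply]
      ring
    rw [hfeq]
    refine HasFDerivAt.fun_sum fun i _ => ?_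
    exact (((((coordX i).hasFDerivAt.mul (coordX i).hasFDerivAt).add
        ((coordY i).hasFDerivAt.mul (coordY i).hasFDerivAt)).const_mul _).add
      ((((coordU i).hasFDerivAt.mul (coordU i).hasFDerivAt).add
        ((coordV i).hasFDerivAt.mul (coordV i).hasFDerivAt)).const_mul _))
  refine ⟨fun p => (key p).differentiableAt, fun p => ⟨_, fun w => ?_, key p⟩⟩
  simp only [ContinuousLinearMap.coe_sum', Finset.sum_apply,
    ContinuousLinearMap.add_apply, ContinuousLinearMap.coe_smul',
    Pi.smul_apply, smul_eq_mul, coordX_apply, coordY_apply, coordU_apply,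
    coordV_apply, Gform, Amap, Finset.mul_sum, neg_mul, ← Finset.sum_neg_distrib]
  refine Finset.sum_congr rfl fun i _ => ?_
  ring
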